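/- Let 0 < α < 1 and 0 < η ≤ α. A continuous path Y : (0,T] → ℝ belongs to the singular Hölder space C^{α,η}((0,T]) if and only if the reparametrized path t ↦ Y(t^{α/η}) extends to (is) an α-Hölder continuous function on [0, T^{η/α}]. -/

import Mathlib

open Set Real Filter Topology

lemma rpow_diff_le_of_one_le {β s t : ℝ} (hβ : 1 ≤ β) (hs : 0 < s) (hst : s ≤ t) :
    t ^ β - s ^ β ≤ β * t ^ (β - 1) * (t - s) := by
  have ht : 0 < t := hs.trans_le hst
  have hx : (-1:ℝ) ≤ s / t - 1 := by
    have : 0 < s / t := div_pos hs ht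
    linarith
  have hb := one_add_mul_self_le_rpow_one_add hx hβ
  rw [add_sub_cancel] at hb
  rw [Real.div_rpow hs.le ht.le] at hb
  have htβ : 0 < t ^ β := Real.rpow_pos_of_pos ht β
  have h2 : (1 + β * (s / t - 1)) * t ^ β ≤ s ^ β := (le_div_iff₀ htβ).mp hb
  have h3 : t ^ β = t ^ (β - 1) * t := by
    rw [Real.rpow_sub_one ht.ne']; field_simp
  have h7 : (1 + β * (s / t - 1)) * t ^ β = t ^ β + β * ((s - t) * t ^ (β - 1)) := by
    rw [h3]; field_simp
  rw [h7] at h2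
  linarith

lemma rpow_diff_le_of_le_one {γ s t : ℝ} (hγ0 : 0 ≤ γ) (hγ1 : γ ≤ 1) (hs : 0 < s) (hst : s ≤ t) :
    t ^ γ - s ^ γ ≤ γ * s ^ (γ - 1) * (t - s) := by
  have ht : 0 < t := hs.trans_le hst
  have hx : (-1:ℝ) ≤ t / s - 1 := by
    have : 0 < t / s := div_pos ht hs
    linarith
  have hb := rpow_one_add_le_one_add_mul_self hx hγ0 hγ1
  rw [add_sub_cancel] at hb
  rw [Real.div_rpow ht.le hs.le] at hb
  have hsγ : 0 < s ^ γ := Real.rpow_pos_of_pos hs γ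
  have h2 : t ^ γ ≤ (1 + γ * (t / s - 1)) * s ^ γ := (div_le_iff₀ hsγ).mp hb
  have h3 : s ^ γ = s ^ (γ - 1) * s := by
    rw [Real.rpow_sub_one hs.ne']; field_simp
  have h7 : (1 + γ * (t / s - 1)) * s ^ γ = s ^ γ + γ * ((t - s) * s ^ (γ - 1)) := by
    rw [h3]; field_simp
  rw [h7] at h2
  linarith

lemma holder_of_near (S α A : ℝ) (hS : 0 < S) (hα0 : 0 < α) (hA : 0 ≤ A) (Z0 : ℝ → ℝ)
    (hnear : ∀ s t : ℝ, 0 < s → s ≤ t → t ≤ S → t ≤ 2*s → |Z0 t - Z0 s| ≤ A * (t-s)^α) :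
    ∃ L C : ℝ, 0 ≤ C ∧ (∀ t, 0 < t → t ≤ S → |Z0 t - L| ≤ C * t ^ α) ∧
      (∀ s t : ℝ, 0 < s → s ≤ t → t ≤ S → |Z0 t - Z0 s| ≤ C * (t - s) ^ α) := by
  have hq1 : (2:ℝ) ^ (-α) < 1 :=
    Real.rpow_lt_one_of_one_lt_of_neg one_lt_two (by linarith)
  have hq0 : (0:ℝ) < 2 ^ (-α) := Real.rpow_pos_of_pos two_pos _
  set q := (2:ℝ) ^ (-α) with hqdef
  set B := A / (1 - q) with hBdef
  have hdpos : 0 < 1 - q := by linarith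
  have hB0 : 0 ≤ B := div_nonneg hA hdpos.le
  have hBd : B * (1 - q) = A := div_mul_cancel₀ A hdpos.ne'
  have hAB : A ≤ B := by nlinarith
  have hchain : ∀ n : ℕ, ∀ s t : ℝ, 0 < s → s ≤ t → t ≤ S → t ≤ 2^n * s →
      |Z0 t - Z0 s| ≤ B * t ^ α := by
    intro n
    induction n with
    | zero =>
      intro s t hs hst htS h2
      rw [pow_zero, one_mul] at h2
      have hts : t = s := le_antisymm h2 hst
      rw [hts, sub_self, abs_zero]
      exact mul_nonneg hB0 (Real.rpow_nonneg hs.le α)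
    | succ n ih =>
      intro s t hs hst htS h2
      have ht : 0 < t := hs.trans_le hst
      have htα : (0:ℝ) < t ^ α := Real.rpow_pos_of_pos ht α
      by_cases hc : t ≤ 2 * s
      · have h := hnear s t hs hst htS hc
        have h1 : (t - s) ^ α ≤ t ^ α := Real.rpow_le_rpow (by linarith) (by linarith) hα0.le
        calc |Z0 t - Z0 s| ≤ A * (t-s)^α := h
          _ ≤ B * t ^ α := mul_le_mul hAB h1 (Real.rpow_nonneg (by linarith) α) hB0
      · push_neg at hc
        have hsm : s ≤ t / 2 := by linarith
        have hm0 : 0 < t / 2 := by linarith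
        have hmn : t / 2 ≤ 2 ^ n * s := by
          have h22 : (2:ℝ)^(n+1) = 2 * 2^n := by ring
          rw [h22] at h2; linarith
        have e1 := hnear (t/2) t hm0 (by linarith) htS (by linarith)
        have e2 := ih s (t/2) hs hsm (by linarith) hmn
        have tri : |Z0 t - Z0 s| ≤ |Z0 t - Z0 (t/2)| + |Z0 (t/2) - Z0 s| := abs_sub_le _ _ _
        have hhalf : t - t/2 = t/2 := by ring
        rw [hhalf] at e1
        have hhα : (t/2) ^ α = t ^ α * q := by
          rw [hqdef, div_eq_mul_inv, Real.mul_rpow ht.le (by norm_num),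
            Real.inv_rpow (by norm_num), ← Real.rpow_neg (by norm_num)]
        rw [hhα] at e1 e2
        have key : (A + B) * q ≤ B := by nlinarith [mul_nonneg hA (sub_nonneg.mpr hq1.le)]
        nlinarith [mul_le_mul_of_nonneg_right key htα.le]
  have hglob : ∀ s t : ℝ, 0 < s → s ≤ t → t ≤ S → |Z0 t - Z0 s| ≤ B * t ^ α := by
    intro s t hs hst htS
    obtain ⟨n, hn⟩ := pow_unbounded_of_one_lt (t / s) (one_lt_two (α := ℝ))
    exact hchain n s t hs hst htS (le_of_lt ((div_lt_iff₀ hs).mp hn))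
  have h2α1 : (1:ℝ) ≤ 2 ^ α := Real.one_le_rpow one_le_two hα0.le
  set C := B * 2 ^ α with hCdef
  have hC0 : 0 ≤ C := mul_nonneg hB0 (by positivity)
  have hBC : B ≤ C := le_mul_of_one_le_right hB0 h2α1
  have hhold : ∀ s t : ℝ, 0 < s → s ≤ t → t ≤ S → |Z0 t - Z0 s| ≤ C * (t-s)^α := by
    intro s t hs hst htS
    by_cases hc : t ≤ 2*s
    · exact (hnear s t hs hst htS hc).trans
        (mul_le_mul_of_nonneg_right (hAB.trans hBC) (Real.rpow_nonneg (by linarith) α))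
    · push_neg at hc
      have ht : 0 < t := hs.trans_le hst
      have h1 : t ^ α ≤ (2*(t-s)) ^ α := Real.rpow_le_rpow ht.le (by linarith) hα0.le
      have h2 : ((2:ℝ)*(t-s))^α = 2^α * (t-s)^α := Real.mul_rpow (by norm_num) (by linarith)
      calc |Z0 t - Z0 s| ≤ B * t^α := hglob s t hs hst htS
        _ ≤ B * (2^α * (t-s)^α) := by rw [← h2]; exact mul_le_mul_of_nonneg_left h1 hB0
        _ = C * (t-s)^α := by rw [hCdef]; ring
  have hpow : ∀ n : ℕ, ((2:ℝ)^n : ℝ)^α = ((2:ℝ)^α)^n := by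
    intro n
    rw [← Real.rpow_natCast (2:ℝ) n, ← Real.rpow_mul (by norm_num : (0:ℝ) ≤ 2), mul_comm,
      Real.rpow_mul (by norm_num : (0:ℝ) ≤ 2), Real.rpow_natCast]
  have h2αgt : (1:ℝ) < 2 ^ α := Real.one_lt_rpow_iff_of_pos two_pos |>.mpr (Or.inl ⟨one_lt_two, hα0⟩)
  have hSdiv : ∀ n : ℕ, 0 < S / 2^n := fun n => by positivity
  have hSdivle : ∀ n : ℕ, S / 2^n ≤ S := fun n => div_le_self hS.le (one_le_pow₀ (by norm_num : (1:ℝ) ≤ 2))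
  have hseq : ∀ N n : ℕ, N ≤ n → |Z0 (S/2^N) - Z0 (S/2^n)| ≤ B * (S/2^N)^α := by
    intro N n hNn
    have hm : S/2^n ≤ S/2^N := by
      gcongr
      · norm_num
    exact hglob _ _ (hSdiv n) hm (hSdivle N)
  have hcau : CauchySeq (fun n : ℕ => Z0 (S / 2^n)) := by
    rw [Metric.cauchySeq_iff']
    intro ε hε
    obtain ⟨N, hN⟩ := pow_unbounded_of_one_lt (B * S^α / ε) h2αgt
    refine ⟨N, fun n hn => ?_⟩
    rw [Real.dist_eq, abs_sub_comm]
    have h1 := hseq N n hn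
    have h2 : B * (S/2^N)^α < ε := by
      rw [Real.div_rpow hS.le (by positivity), hpow N]
      rw [div_lt_iff₀ hε] at hN
      have hp : (0:ℝ) < ((2:ℝ)^α)^N := by positivity
      rw [mul_div_assoc', div_lt_iff₀ hp]
      nlinarith
    linarith [abs_nonneg (Z0 (S/2^N) - Z0 (S/2^n))]
  obtain ⟨L, hL⟩ := cauchySeq_tendsto_of_complete hcau
  refine ⟨L, C, hC0, ?_, hhold⟩
  intro t ht htS
  have htend : Tendsto (fun n : ℕ => |Z0 t - Z0 (S/2^n)|) atTop (𝓝 |Z0 t - L|) :=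
    (tendsto_const_nhds.sub hL).abs
  have hBC' : ∀ᶠ n in atTop, |Z0 t - Z0 (S/2^n)| ≤ C * t ^ α := by
    obtain ⟨N, hN⟩ := pow_unbounded_of_one_lt (S / t) (one_lt_two (α := ℝ))
    filter_upwards [Filter.eventually_ge_atTop N] with n hn
    have hlt : S / t < 2^n := hN.trans_le (by gcongr; norm_num)
    have h2N : S / 2^n ≤ t := by
      rw [div_lt_iff₀ ht] at hlt
      rw [div_le_iff₀ (by positivity : (0:ℝ) < 2^n)]
      nlinarith
    exact (hglob _ t (hSdiv n) h2N htS).trans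
      (mul_le_mul_of_nonneg_right hBC (Real.rpow_nonneg ht.le α))
  exact le_of_tendsto htend hBC'

theorem singular_holder_time_change
    (T α η : ℝ) (hT : 0 < T) (hα0 : 0 < α) (hα1 : α < 1) (hη0 : 0 < η) (hηα : η ≤ α)
    (Y : ℝ → ℝ) (hcont : ContinuousOn Y (Ioc 0 T)) :
    (∃ K : ℝ, 0 ≤ K ∧ ∀ s t : ℝ, 0 < s → s < t → t ≤ T →
        |Y t - Y s| ≤ K * s ^ (η - α) * (t - s) ^ α) ↔
    (∃ Z : ℝ → ℝ,
      (∀ t ∈ Ioc (0:ℝ) (T ^ (η / α)), Z t = Y (t ^ (α / η))) ∧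
      ∃ C : ℝ, 0 ≤ C ∧ ∀ s ∈ Icc (0:ℝ) (T ^ (η / α)), ∀ t ∈ Icc (0:ℝ) (T ^ (η / α)),
        |Z t - Z s| ≤ C * |t - s| ^ α) := by
  have hβpos : 0 < α / η := div_pos hα0 hη0
  have hβ1 : 1 ≤ α / η := (one_le_div hη0).mpr hηα
  have hγpos : 0 < η / α := div_pos hη0 hα0
  have hγ1 : η / α ≤ 1 := (div_le_one hα0).mpr hηα
  have hS : 0 < T ^ (η / α) := Real.rpow_pos_of_pos hT _
  have hSβ : (T ^ (η / α)) ^ (α / η) = T := by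
    rw [← Real.rpow_mul hT.le]
    rw [div_mul_div_comm]
    rw [show η * α / (α * η) = 1 by field_simp]
    exact Real.rpow_one T
  constructor
  · rintro ⟨K, hK, hY⟩
    set A := K * (α/η)^α * 2^((α/η-1)*α) with hAdef
    have hA : 0 ≤ A := by positivity
    have hnear : ∀ s t : ℝ, 0 < s → s ≤ t → t ≤ T ^ (η/α) → t ≤ 2*s →
        |Y (t ^ (α/η)) - Y (s ^ (α/η))| ≤ A * (t-s)^α := by
      intro s t hs hst htS hc
      rcases eq_or_lt_of_le hst with rfl | hlt
      · simp [Real.zero_rpow hα0.ne']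
      have ht : 0 < t := hs.trans hlt
      have hsb : 0 < s ^ (α/η) := Real.rpow_pos_of_pos hs _
      have hlt' : s ^ (α/η) < t ^ (α/η) := Real.rpow_lt_rpow hs.le hlt hβpos
      have htT : t ^ (α/η) ≤ T := by
        have := Real.rpow_le_rpow ht.le htS hβpos.le
        rwa [hSβ] at this
      have h0 := hY (s ^ (α/η)) (t ^ (α/η)) hsb hlt' htT
      have e := rpow_diff_le_of_one_le hβ1 hs hst
      have hnn : 0 ≤ t ^ (α/η) - s ^ (α/η) := by linarith
      have e2 : (t^(α/η) - s^(α/η))^α ≤ ((α/η) * t^(α/η-1) * (t-s))^α :=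
        Real.rpow_le_rpow hnn e hα0.le
      have e3 : ((α/η) * t^(α/η-1) * (t-s))^α = (α/η)^α * t^((α/η-1)*α) * (t-s)^α := by
        rw [Real.mul_rpow (by positivity) (by linarith),
          Real.mul_rpow hβpos.le (by positivity), ← Real.rpow_mul ht.le]
      have e5 : (s^(α/η))^(η-α) = s^((1-α/η)*α) := by
        rw [← Real.rpow_mul hs.le]
        congr 1
        field_simp
      have e6 : s^((1-α/η)*α) * t^((α/η-1)*α) ≤ 2^((α/η-1)*α) := by
        have hsre : s^((1-α/η)*α) * s^((α/η-1)*α) = 1 := by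
          rw [← Real.rpow_add hs, show (1-α/η)*α + (α/η-1)*α = 0 by ring, Real.rpow_zero]
        have h2 : s^((1-α/η)*α) * t^((α/η-1)*α) = (t/s)^((α/η-1)*α) := by
          rw [Real.div_rpow ht.le hs.le,
            eq_div_iff (Real.rpow_pos_of_pos hs ((α/η-1)*α)).ne']
          linear_combination t^((α/η-1)*α) * hsre
        rw [h2]
        exact Real.rpow_le_rpow (by positivity)
          (by rw [div_le_iff₀ hs]; linarith) (by nlinarith)
      have hts : (0:ℝ) ≤ (t-s)^α := Real.rpow_nonneg (by linarith) α
      calc |Y (t ^ (α/η)) - Y (s ^ (α/η))|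
          ≤ K * (s^(α/η))^(η-α) * (t^(α/η) - s^(α/η))^α := h0
        _ ≤ K * (s^(α/η))^(η-α) * ((α/η)^α * t^((α/η-1)*α) * (t-s)^α) := by
            apply mul_le_mul_of_nonneg_left (e2.trans_eq e3)
            exact mul_nonneg hK (Real.rpow_nonneg hsb.le _)
        _ = K * (α/η)^α * (s^((1-α/η)*α) * t^((α/η-1)*α)) * (t-s)^α := by
            rw [e5]; ring
        _ ≤ K * (α/η)^α * 2^((α/η-1)*α) * (t-s)^α := by
            apply mul_le_mul_of_nonneg_right _ hts
            apply mul_le_mul_of_nonneg_left e6 (by positivity)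
        _ = A * (t-s)^α := by rw [hAdef]
    obtain ⟨L, C, hC0, hlim, hhold⟩ := holder_of_near (T ^ (η/α)) α A hS hα0 hA
      (fun u => Y (u ^ (α/η))) hnear
    refine ⟨fun u => if u = 0 then L else Y (u ^ (α/η)), ?_, C, hC0, ?_⟩
    · intro t ht
      exact if_neg ht.1.ne'
    · have main : ∀ s ∈ Icc (0:ℝ) (T ^ (η/α)), ∀ t ∈ Icc (0:ℝ) (T ^ (η/α)), s ≤ t →
          |(if t = 0 then L else Y (t ^ (α/η))) - (if s = 0 then L else Y (s ^ (α/η)))|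
            ≤ C * |t - s| ^ α := by
        rintro s ⟨hs0, hsS⟩ t ⟨ht0, htS⟩ hst
        rcases eq_or_lt_of_le hs0 with rfl | hs
        · rcases eq_or_lt_of_le ht0 with rfl | ht
          · simp [Real.zero_rpow hα0.ne']
          · rw [if_neg ht.ne', if_pos rfl, sub_zero, abs_of_pos ht]
            exact hlim t ht htS
        · have ht : 0 < t := hs.trans_le hst
          rw [if_neg ht.ne', if_neg hs.ne', abs_of_nonneg (by linarith : (0:ℝ) ≤ t - s)]
          exact hhold s t hs hst htS
      intro s hs t ht
      rcases le_total s t with h | h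
      · exact main s hs t ht h
      · rw [abs_sub_comm, abs_sub_comm t s]
        exact main t ht s hs h
  · rintro ⟨Z, hZeq, C, hC, hH⟩
    refine ⟨C, hC, ?_⟩
    intro s t hs hst htT
    have ht : 0 < t := hs.trans hst
    have hu0 : 0 < s ^ (η/α) := Real.rpow_pos_of_pos hs _
    have hv0 : 0 < t ^ (η/α) := Real.rpow_pos_of_pos ht _
    have huS : s ^ (η/α) ≤ T ^ (η/α) := Real.rpow_le_rpow hs.le (by linarith) hγpos.le
    have hvS : t ^ (η/α) ≤ T ^ (η/α) := Real.rpow_le_rpow ht.le htT hγpos.le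
    have hback : ∀ x : ℝ, 0 < x → (x ^ (η/α)) ^ (α/η) = x := by
      intro x hx
      rw [← Real.rpow_mul hx.le, div_mul_div_comm,
        show η * α / (α * η) = 1 by field_simp, Real.rpow_one]
    have hZu : Z (s ^ (η/α)) = Y s := by
      rw [hZeq _ ⟨hu0, huS⟩, hback s hs]
    have hZv : Z (t ^ (η/α)) = Y t := by
      rw [hZeq _ ⟨hv0, hvS⟩, hback t ht]
    have huv : s ^ (η/α) ≤ t ^ (η/α) := Real.rpow_le_rpow hs.le hst.le hγpos.le
    have h1 := hH (s ^ (η/α)) ⟨hu0.le, huS⟩ (t ^ (η/α)) ⟨hv0.le, hvS⟩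
    rw [hZu, hZv, abs_of_nonneg (by linarith : (0:ℝ) ≤ t ^ (η/α) - s ^ (η/α))] at h1
    have e := rpow_diff_le_of_le_one hγpos.le hγ1 hs hst.le
    have e2 : (t^(η/α) - s^(η/α))^α ≤ ((η/α) * s^(η/α-1) * (t-s))^α :=
      Real.rpow_le_rpow (by linarith) e hα0.le
    have e3 : ((η/α) * s^(η/α-1) * (t-s))^α ≤ (s^(η/α-1) * (t-s))^α := by
      apply Real.rpow_le_rpow
        (mul_nonneg (mul_nonneg hγpos.le (Real.rpow_nonneg hs.le _)) (by linarith)) _ hα0.le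
      have hx : (0:ℝ) ≤ s^(η/α-1) * (t-s) :=
        mul_nonneg (Real.rpow_nonneg hs.le _) (by linarith)
      nlinarith
    have e4 : (s^(η/α-1) * (t-s))^α = s^(η-α) * (t-s)^α := by
      rw [Real.mul_rpow (Real.rpow_nonneg hs.le _) (by linarith), ← Real.rpow_mul hs.le]
      congr 2
      field_simp
    calc |Y t - Y s| ≤ C * (t^(η/α) - s^(η/α))^α := h1
      _ ≤ C * (s^(η-α) * (t-s)^α) := by
          apply mul_le_mul_of_nonneg_left _ hC
          rw [← e4]
          exact e2.trans e3
      _ = C * s^(η-α) * (t-s)^α := by ring
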